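/- Let h : [0,L] → ℝ be continuous and positive, and let n ≥ 2 be an integer. For any 0 < r < L, define φ_r(t) = 1 for 0 ≤ t ≤ r and φ_r(t) = (∫_t^L h(s)^{1-n} ds) / (∫_r^L h(s)^{1-n} ds) for r ≤ t ≤ L. Then the Rayleigh quotient satisfies (∫_0^L h(t)^{n-1} φ_r'(t)² dt) / (∫_0^L h(t)^{n-1} φ_r(t)² dt) ≤ (∫_0^r h(t)^{1-n} dt) / (r² ∫_r^L h(t)^{1-n} dt). -/

import Mathlib

open MeasureTheory intervalIntegral

/-- Rayleigh quotient estimate for the test function `φ_r` on a warped product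
collar `[0,L] ×_h Σ` of an `n`-dimensional manifold. -/
theorem rayleigh_quotient_estimate (L r : ℝ) (n : ℕ) (hn : 2 ≤ n)
    (hr : 0 < r) (hrL : r < L)
    (h : ℝ → ℝ) (hc : ContinuousOn h (Set.Icc (0 : ℝ) L))
    (hpos : ∀ t ∈ Set.Icc (0 : ℝ) L, 0 < h t) :
    let φ : ℝ → ℝ := fun t =>
      if t ≤ r then 1
      else (∫ s in t..L, h s ^ ((1 : ℝ) - n)) / (∫ s in r..L, h s ^ ((1 : ℝ) - n))
    (∫ t in (0 : ℝ)..L, h t ^ ((n : ℝ) - 1) * (deriv φ t) ^ 2) /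
        (∫ t in (0 : ℝ)..L, h t ^ ((n : ℝ) - 1) * (φ t) ^ 2) ≤
      (∫ t in (0 : ℝ)..r, h t ^ ((1 : ℝ) - n)) /
        (r ^ 2 * ∫ t in r..L, h t ^ ((1 : ℝ) - n)) := by
  intro φ
  have hφ : φ = fun t =>
      if t ≤ r then (1 : ℝ)
      else (∫ s in t..L, h s ^ ((1 : ℝ) - n)) / (∫ s in r..L, h s ^ ((1 : ℝ) - n)) := rfl
  set g : ℝ → ℝ := fun t => h t ^ ((1 : ℝ) - n) with hgdef
  set p : ℝ → ℝ := fun t => h t ^ ((n : ℝ) - 1) with hpdef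
  have h0L : (0 : ℝ) ≤ L := le_trans hr.le hrL.le
  have hgc : ContinuousOn g (Set.Icc 0 L) :=
    hc.rpow_const fun t ht => Or.inl (hpos t ht).ne'
  have hpc : ContinuousOn p (Set.Icc 0 L) :=
    hc.rpow_const fun t ht => Or.inl (hpos t ht).ne'
  have hgpos : ∀ t ∈ Set.Icc (0 : ℝ) L, 0 < g t := fun t ht =>
    Real.rpow_pos_of_pos (hpos t ht) _
  have hppos : ∀ t ∈ Set.Icc (0 : ℝ) L, 0 < p t := fun t ht =>
    Real.rpow_pos_of_pos (hpos t ht) _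
  have hpg : ∀ t ∈ Set.Icc (0 : ℝ) L, p t * g t = 1 := by
    intro t ht
    rw [hpdef, hgdef]
    simp only
    rw [← Real.rpow_add (hpos t ht)]
    norm_num
  -- subset facts
  have hsub0r : Set.Icc (0 : ℝ) r ⊆ Set.Icc 0 L := Set.Icc_subset_Icc le_rfl hrL.le
  have hsubrL : Set.Icc r L ⊆ Set.Icc 0 L := Set.Icc_subset_Icc hr.le le_rfl
  -- integrability of g and p on subintervals
  have hgi0r : IntervalIntegrable g volume 0 r :=
    ((hgc.mono (by rw [Set.uIcc_of_le hr.le]; exact hsub0r))).intervalIntegrable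
  have hgirL : IntervalIntegrable g volume r L :=
    ((hgc.mono (by rw [Set.uIcc_of_le hrL.le]; exact hsubrL))).intervalIntegrable
  have hpi0r : IntervalIntegrable p volume 0 r :=
    ((hpc.mono (by rw [Set.uIcc_of_le hr.le]; exact hsub0r))).intervalIntegrable
  set D : ℝ := ∫ s in r..L, g s with hDdef
  set A : ℝ := ∫ s in (0 : ℝ)..r, g s with hAdef
  set B : ℝ := ∫ s in (0 : ℝ)..r, p s with hBdef
  have hD : 0 < D :=
    intervalIntegral_pos_of_pos_on hgirL
      (fun x hx => hgpos x ⟨le_trans hr.le hx.1.le, hx.2.le⟩) hrL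
  have hA : 0 < A :=
    intervalIntegral_pos_of_pos_on hgi0r
      (fun x hx => hgpos x ⟨hx.1.le, le_trans hx.2.le hrL.le⟩) hr
  -- φ agrees with the formula on [r, L]
  have hφ_formula : ∀ t ∈ Set.Icc r L, φ t = (∫ s in t..L, g s) / D := by
    intro t ht
    by_cases htr : t ≤ r
    · have : t = r := le_antisymm htr ht.1
      subst this
      simp [hφ, div_self hD.ne']
      exact (div_self hD.ne').symm
    · simp [hφ, htr]
  -- derivative of φ is 0 on (0, r)
  have hderiv0 : ∀ t ∈ Set.Ioo (0 : ℝ) r, deriv φ t = 0 := by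
    intro t ht
    have hev : φ =ᶠ[nhds t] fun _ => (1 : ℝ) := by
      filter_upwards [Iio_mem_nhds ht.2] with x hx
      simp only [hφ]
      rw [if_pos (Set.mem_Iio.1 hx).le]
    rw [hev.deriv_eq, deriv_const]
  -- derivative of φ on (r, L)
  have hderivrL : ∀ t ∈ Set.Ioo r L, deriv φ t = -(g t) / D := by
    intro t ht
    have ht0 : 0 < t := lt_trans hr ht.1
    have hmemIoo : t ∈ Set.Ioo (0 : ℝ) L := ⟨ht0, ht.2⟩
    have hCA : ContinuousAt g t :=
      hgc.continuousAt (Icc_mem_nhds ht0 ht.2)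
    have hSM : StronglyMeasurableAtFilter g (nhds t) volume :=
      ContinuousAt.stronglyMeasurableAtFilter isOpen_Ioo
        (fun x hx => hgc.continuousAt (Icc_mem_nhds hx.1 hx.2)) t hmemIoo
    have hint : IntervalIntegrable g volume t L := by
      apply ContinuousOn.intervalIntegrable
      rw [Set.uIcc_of_le ht.2.le]
      exact hgc.mono (Set.Icc_subset_Icc ht0.le le_rfl)
    have hd : HasDerivAt (fun u => ∫ s in u..L, g s) (-(g t)) t :=
      integral_hasDerivAt_left hint hSM hCA
    have hd2 : HasDerivAt (fun u => (∫ s in u..L, g s) / D) (-(g t) / D) t :=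
      hd.div_const D
    have hev : φ =ᶠ[nhds t] fun u => (∫ s in u..L, g s) / D := by
      filter_upwards [Ioi_mem_nhds ht.1] with x hx
      simp only [hφ]
      rw [if_neg (not_le.2 (Set.mem_Ioi.1 hx))]
    rw [hev.deriv_eq, hd2.deriv]
  -- a.e. equality for the numerator integrand on (0, r]
  have hne_r : ∀ᵐ x : ℝ, x ≠ r := by
    have : (volume : Measure ℝ) {r} = 0 := Real.volume_singleton
    rw [measure_eq_zero_iff_ae_notMem] at this
    simpa using this
  have hne_L : ∀ᵐ x : ℝ, x ≠ L := by
    have : (volume : Measure ℝ) {L} = 0 := Real.volume_singleton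
    rw [measure_eq_zero_iff_ae_notMem] at this
    simpa using this
  have hae0r : ∀ᵐ x : ℝ, x ∈ Set.uIoc (0 : ℝ) r → p x * (deriv φ x) ^ 2 = 0 := by
    filter_upwards [hne_r] with x hx hmem
    rw [Set.uIoc_of_le hr.le] at hmem
    have : x ∈ Set.Ioo (0 : ℝ) r := ⟨hmem.1, lt_of_le_of_ne hmem.2 hx⟩
    rw [hderiv0 x this]
    ring
  have haerL : ∀ᵐ x : ℝ, x ∈ Set.uIoc r L → p x * (deriv φ x) ^ 2 = g x / D ^ 2 := by
    filter_upwards [hne_L] with x hx hmem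
    rw [Set.uIoc_of_le hrL.le] at hmem
    have hxIoo : x ∈ Set.Ioo r L := ⟨hmem.1, lt_of_le_of_ne hmem.2 hx⟩
    have hxIcc : x ∈ Set.Icc (0 : ℝ) L := ⟨le_trans hr.le hxIoo.1.le, hxIoo.2.le⟩
    rw [hderivrL x hxIoo]
    have hpgx := hpg x hxIcc
    have hexp : p x * (-g x / D) ^ 2 = p x * g x * g x / D ^ 2 := by ring
    rw [hexp, hpgx, one_mul]
  -- numerator integrability on pieces
  have hFNi0r : IntervalIntegrable (fun t => p t * (deriv φ t) ^ 2) volume 0 r := by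
    rw [intervalIntegrable_iff]
    exact (integrableOn_zero).congr
      ((ae_restrict_iff' measurableSet_uIoc).2 (hae0r.mono fun x hx hmem => (hx hmem).symm))
  have hFNirL : IntervalIntegrable (fun t => p t * (deriv φ t) ^ 2) volume r L := by
    rw [intervalIntegrable_iff]
    have : IntegrableOn (fun t => g t / D ^ 2) (Set.uIoc r L) volume := by
      rw [← intervalIntegrable_iff]
      exact hgirL.div_const _
    exact this.congr
      ((ae_restrict_iff' measurableSet_uIoc).2 (haerL.mono fun x hx hmem => (hx hmem).symm))
  -- numerator value
  have hN0r : (∫ t in (0 : ℝ)..r, p t * (deriv φ t) ^ 2) = 0 := by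
    rw [integral_congr_ae hae0r]
    simp
  have hNrL : (∫ t in r..L, p t * (deriv φ t) ^ 2) = D / D ^ 2 := by
    rw [integral_congr_ae haerL, intervalIntegral.integral_div]
  have hN : (∫ t in (0 : ℝ)..L, p t * (deriv φ t) ^ 2) = 1 / D := by
    rw [← integral_add_adjacent_intervals hFNi0r hFNirL, hN0r, hNrL, zero_add, sq]
    rw [div_mul_eq_div_div, div_self hD.ne']
  -- denominator: pieces
  have hG : ContinuousOn (fun t => p t * ((∫ s in t..L, g s) / D) ^ 2) (Set.Icc r L) := by
    have h1 : ContinuousOn (fun t => ∫ s in t..L, g s) (Set.Icc r L) := by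
      have := continuousOn_primitive_interval_left (f := g) (μ := volume) (a := r) (b := L)
        (by rw [Set.uIcc_of_le hrL.le]; exact (hgc.mono hsubrL).integrableOn_compact isCompact_Icc)
      rwa [Set.uIcc_of_le hrL.le] at this
    exact (hpc.mono hsubrL).mul ((h1.div_const D).pow 2)
  have hDen0r : (∫ t in (0 : ℝ)..r, p t * (φ t) ^ 2) = B := by
    apply integral_congr
    intro t ht
    rw [Set.uIcc_of_le hr.le] at ht
    simp [hφ, ht.2]
  have hDenrL : (∫ t in r..L, p t * (φ t) ^ 2)
      = ∫ t in r..L, p t * ((∫ s in t..L, g s) / D) ^ 2 := by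
    apply integral_congr
    intro t ht
    rw [Set.uIcc_of_le hrL.le] at ht
    show p t * φ t ^ 2 = p t * ((∫ s in t..L, g s) / D) ^ 2
    rw [hφ_formula t ht]
  have hDeni0r : IntervalIntegrable (fun t => p t * (φ t) ^ 2) volume 0 r := by
    rw [intervalIntegrable_iff]
    refine (hpi0r.def'.congr_fun ?_ measurableSet_uIoc)
    intro t ht
    rw [Set.uIoc_of_le hr.le] at ht
    simp [hφ, ht.2]
  have hGint : IntervalIntegrable (fun t => p t * ((∫ s in t..L, g s) / D) ^ 2) volume r L :=
    hG.intervalIntegrable_of_Icc hrL.le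
  have hDenirL : IntervalIntegrable (fun t => p t * (φ t) ^ 2) volume r L := by
    rw [intervalIntegrable_iff]
    refine (hGint.def'.congr_fun ?_ measurableSet_uIoc)
    intro t ht
    rw [Set.uIoc_of_le hrL.le] at ht
    show p t * ((∫ s in t..L, g s) / D) ^ 2 = p t * φ t ^ 2
    rw [hφ_formula t ⟨ht.1.le, ht.2⟩]
  have hGnonneg : 0 ≤ ∫ t in r..L, p t * ((∫ s in t..L, g s) / D) ^ 2 := by
    apply integral_nonneg hrL.le
    intro t ht
    have := (hppos t (hsubrL ht)).le
    positivity
  -- lower bound on B via pointwise AM-GM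
  have hk : 0 < r / A := div_pos hr hA
  have hBlow : r ^ 2 / A ≤ B := by
    set k : ℝ := r / A with hkdef
    have hpt : ∀ t ∈ Set.Icc (0 : ℝ) r, 2 * k - k ^ 2 * g t ≤ p t := by
      intro t ht
      have htL : t ∈ Set.Icc (0 : ℝ) L := hsub0r ht
      have h1 := hppos t htL
      have h2 := hgpos t htL
      have h3 := hpg t htL
      nlinarith [mul_nonneg (sq_nonneg (p t - k)) h2.le]
    have hint1 : IntervalIntegrable (fun t => 2 * k - k ^ 2 * g t) volume 0 r :=
      (_root_.intervalIntegrable_const).sub (hgi0r.const_mul _)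
    have hmono := integral_mono_on hr.le hint1 hpi0r hpt
    have hval : (∫ t in (0 : ℝ)..r, (2 * k - k ^ 2 * g t)) = 2 * k * r - k ^ 2 * A := by
      rw [intervalIntegral.integral_sub _root_.intervalIntegrable_const (hgi0r.const_mul _),
        intervalIntegral.integral_const, intervalIntegral.integral_const_mul]
      simp [mul_comm]
      exact Or.inl rfl
    rw [hval] at hmono
    have heq : 2 * k * r - k ^ 2 * A = r ^ 2 / A := by
      rw [hkdef, div_pow, div_mul_eq_mul_div, sq, sq]
      field_simp
      ring
    linarith [hmono, heq.symm.le]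
  -- denominator lower bound
  have hDen : r ^ 2 / A ≤ ∫ t in (0 : ℝ)..L, p t * (φ t) ^ 2 := by
    rw [← integral_add_adjacent_intervals hDeni0r hDenirL, hDen0r, hDenrL]
    linarith
  have hrA : 0 < r ^ 2 / A := div_pos (by positivity) hA
  -- conclude
  rw [hN]
  calc (1 / D) / (∫ t in (0 : ℝ)..L, p t * (φ t) ^ 2)
      ≤ (1 / D) / (r ^ 2 / A) := by
        apply div_le_div_of_nonneg_left _ hrA hDen
        positivity
    _ = A / (r ^ 2 * D) := by
        rw [div_div_div_eq, one_mul, mul_comm D (r ^ 2)]
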